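/- For a real Hilbert space H, the self-Jung constant equals the Jung constant: sup{r_{c̄o A}(A) : A ⊆ H bounded, d(A) = 1} = sup{r_H(A) : A ⊆ H bounded, d(A) = 1}, and if H is infinite-dimensional this common value is 1/√2. -/

import Mathlib

set_option maxHeartbeats 1000000

noncomputable def chebRadius {H : Type*} [NormedAddCommGroup H] (A : Set H) : ℝ :=
  ⨅ y : H, ⨆ x : A, ‖(x : H) - y‖

noncomputable def chebRadiusIn {H : Type*} [NormedAddCommGroup H] (B A : Set H) : ℝ :=
  ⨅ y : B, ⨆ x : A, ‖(x : H) - (y : H)‖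

open Metric Bornology Real Set

section aux

variable {H : Type*} [NormedAddCommGroup H] [InnerProductSpace ℝ H] [CompleteSpace H]

lemma bddAbove_range_norm_sub {A : Set H} (hA : IsBounded A) (y : H) :
    BddAbove (Set.range fun x : A => ‖(x : H) - y‖) := by
  obtain ⟨R, hR⟩ := hA.subset_closedBall 0
  refine ⟨R + ‖y‖, ?_⟩
  rintro r ⟨x, rfl⟩
  have hx : ‖(x : H)‖ ≤ R := by simpa using hR x.2
  calc ‖(x : H) - y‖ ≤ ‖(x : H)‖ + ‖y‖ := norm_sub_le _ _
    _ ≤ R + ‖y‖ := by linarith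

lemma iSup_norm_sub_nonneg (A : Set H) (y : H) :
    0 ≤ ⨆ x : A, ‖(x : H) - y‖ :=
  Real.iSup_nonneg fun _ => norm_nonneg _

lemma bddBelow_cheb (A : Set H) :
    BddBelow (Set.range fun y : H => ⨆ x : A, ‖(x : H) - y‖) :=
  ⟨0, by rintro r ⟨y, rfl⟩; exact iSup_norm_sub_nonneg A y⟩

lemma chebRadius_nonneg (A : Set H) : 0 ≤ chebRadius A :=
  le_ciInf fun y => iSup_norm_sub_nonneg A y

lemma chebRadiusIn_eq (A : Set H) (hA : IsBounded A) (hne : A.Nonempty) :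
    chebRadiusIn (closure (convexHull ℝ A)) A = chebRadius A := by
  set K := closure (convexHull ℝ A) with hK
  have hsub : A ⊆ K := (subset_convexHull ℝ A).trans subset_closure
  have hKne : K.Nonempty := hne.mono hsub
  have hKconv : Convex ℝ K := (convex_convexHull ℝ A).closure
  have hKcomp : IsComplete K := isClosed_closure.isComplete
  haveI : Nonempty K := hKne.to_subtype
  have key : ∀ y : H, ∃ v : K, ∀ x ∈ A, ‖x - (v : H)‖ ≤ ‖x - y‖ := by
    intro y
    obtain ⟨v, hvK, hv⟩ := exists_norm_eq_iInf_of_complete_convex hKne hKcomp hKconv y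
    have hchar := (norm_eq_iInf_iff_real_inner_le_zero hKconv hvK).mp hv
    refine ⟨⟨v, hvK⟩, fun x hx => ?_⟩
    have h1 : (inner ℝ (y - v) (x - v) : ℝ) ≤ 0 := hchar x (hsub hx)
    have h2 : ‖x - y‖ ^ 2 = ‖x - v‖ ^ 2 - 2 * (inner ℝ (x - v) (y - v) : ℝ) + ‖y - v‖ ^ 2 := by
      have : x - y = (x - v) - (y - v) := by abel
      rw [this, @norm_sub_sq_real]
    have h3 : (inner ℝ (x - v) (y - v) : ℝ) ≤ 0 := by rwa [real_inner_comm] at h1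
    have h4 : ‖x - v‖ ^ 2 ≤ ‖x - y‖ ^ 2 := by nlinarith [sq_nonneg ‖y - v‖]
    exact le_of_pow_le_pow_left₀ two_ne_zero (norm_nonneg _) h4
  apply le_antisymm
  · apply le_ciInf
    intro y
    obtain ⟨v, hv⟩ := key y
    calc chebRadiusIn K A ≤ ⨆ x : A, ‖(x : H) - (v : H)‖ := by
          apply ciInf_le ⟨0, by rintro r ⟨w, rfl⟩; exact iSup_norm_sub_nonneg A w⟩
      _ ≤ ⨆ x : A, ‖(x : H) - y‖ :=
          ciSup_mono (bddAbove_range_norm_sub hA y) fun x => hv x x.2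
  · apply le_ciInf
    intro v
    exact ciInf_le (bddBelow_cheb A) (v : H)

lemma jung (A : Set H) (hA : IsBounded A) (hne : A.Nonempty) (hd : Metric.diam A = 1) :
    chebRadius A ≤ 1 / Real.sqrt 2 := by
  haveI : Nonempty A := hne.to_subtype
  set s := chebRadius A with hs
  have hs0 : 0 ≤ s := chebRadius_nonneg A
  -- s ≤ 1
  obtain ⟨x₀, hx₀⟩ := hne
  have hs1 : s ≤ 1 := by
    have h1 : s ≤ ⨆ x : A, ‖(x : H) - x₀‖ := ciInf_le (bddBelow_cheb A) x₀
    have h2 : (⨆ x : A, ‖(x : H) - x₀‖) ≤ 1 := by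
      apply ciSup_le
      intro x
      rw [← dist_eq_norm]
      calc dist (x : H) x₀ ≤ Metric.diam A := dist_le_diam_of_mem hA x.2 hx₀
        _ = 1 := hd
    linarith
  -- suffices s^2 ≤ 1/2
  have key : s ^ 2 ≤ 1 / 2 := by
    by_contra hcon
    push_neg at hcon
    set t : ℝ := (2 * s ^ 2 - 1) / 32 with ht
    have ht0 : 0 < t := by rw [ht]; nlinarith
    have ht32 : t ≤ 1 / 32 := by rw [ht]; nlinarith
    have hst : 0 < s - t ^ 2 := by nlinarith
    clear_value t
    -- get an approximate center y
    obtain ⟨y, hy⟩ : ∃ y : H, (⨆ x : A, ‖(x : H) - y‖) < s + t ^ 2 := by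
      apply exists_lt_of_ciInf_lt
      show chebRadius A < s + t ^ 2
      rw [← hs]; nlinarith
    have hsy : ∀ z : H, s ≤ ⨆ x : A, ‖(x : H) - z‖ := fun z =>
      hs ▸ ciInf_le (bddBelow_cheb A) z
    clear_value s
    -- first far point
    obtain ⟨x₁, hx₁⟩ : ∃ x : A, s - t ^ 2 < ‖(x : H) - y‖ := by
      apply exists_lt_of_lt_ciSup
      calc s - t ^ 2 < s := by nlinarith
        _ ≤ _ := hsy y
    set a : ℝ := ‖(x₁ : H) - y‖ with ha
    have ha0 : 0 < a := lt_trans hst hx₁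
    have haub : a < s + t ^ 2 :=
      lt_of_le_of_lt (le_ciSup (bddAbove_range_norm_sub hA y) x₁) hy
    clear_value a
    set u : H := a⁻¹ • ((x₁ : H) - y) with hu
    have hnu : ‖u‖ = 1 := by
      rw [hu, norm_smul, norm_inv, Real.norm_eq_abs, abs_of_pos ha0, ← ha,
        inv_mul_cancel₀ (ne_of_gt ha0)]
    clear_value u
    -- second far point, nearly orthogonal
    obtain ⟨x₂, hx₂⟩ : ∃ x : A, s - t ^ 2 < ‖(x : H) - (y + t • u)‖ := by
      apply exists_lt_of_lt_ciSup
      calc s - t ^ 2 < s := by nlinarith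
        _ ≤ _ := hsy (y + t • u)
    set b : ℝ := ‖(x₂ : H) - y‖ with hb
    have hb0 : 0 ≤ b := norm_nonneg _
    have hbub : b < s + t ^ 2 :=
      lt_of_le_of_lt (le_ciSup (bddAbove_range_norm_sub hA y) x₂) hy
    clear_value b
    set p : ℝ := inner ℝ ((x₂ : H) - y) ((x₁ : H) - y) with hp
    clear_value p
    -- expansion of the shifted norm
    have hexp : ‖(x₂ : H) - (y + t • u)‖ ^ 2 = b ^ 2 - 2 * (t * (a⁻¹ * p)) + t ^ 2 := by
      have h1 : (x₂ : H) - (y + t • u) = ((x₂ : H) - y) - t • u := by abel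
      rw [h1, @norm_sub_sq_real]
      have h2 : (inner ℝ ((x₂ : H) - y) (t • u) : ℝ) = t * (a⁻¹ * p) := by
        rw [hu, inner_smul_right, inner_smul_right, ← hp]
      have h3 : ‖t • u‖ ^ 2 = t ^ 2 := by
        rw [norm_smul, hnu, Real.norm_eq_abs, abs_of_pos ht0, mul_one]
      rw [h2, h3, hb]
    have hlow : (s - t ^ 2) ^ 2 < b ^ 2 - 2 * (t * (a⁻¹ * p)) + t ^ 2 := by
      rw [← hexp]
      nlinarith [hx₂, norm_nonneg ((x₂ : H) - (y + t • u)), hst]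
    have hlow2 : 2 * (t * (a⁻¹ * p)) < b ^ 2 + t ^ 2 - (s - t ^ 2) ^ 2 := by linarith
    -- b is not too small
    have hblow : s - t ^ 2 - t ≤ b := by
      have htri : ‖(x₂ : H) - (y + t • u)‖ ≤ b + ‖t • u‖ := by
        have h1 : (x₂ : H) - (y + t • u) = ((x₂ : H) - y) - t • u := by abel
        rw [h1, hb]
        exact norm_sub_le _ _
      have h3 : ‖t • u‖ = t := by
        rw [norm_smul, hnu, Real.norm_eq_abs, abs_of_pos ht0, mul_one]
      rw [h3] at htri
      linarith
    -- diameter bound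
    have hsq : a ^ 2 - 2 * p + b ^ 2 ≤ 1 := by
      have hdiam : ‖(x₁ : H) - (x₂ : H)‖ ≤ 1 := by
        rw [← dist_eq_norm]
        calc dist (x₁ : H) (x₂ : H) ≤ Metric.diam A := dist_le_diam_of_mem hA x₁.2 x₂.2
          _ = 1 := hd
      have hexpand : ‖(x₁ : H) - (x₂ : H)‖ ^ 2 = a ^ 2 - 2 * p + b ^ 2 := by
        have h1 : (x₁ : H) - (x₂ : H) = ((x₁ : H) - y) - ((x₂ : H) - y) := by abel
        rw [h1, @norm_sub_sq_real, real_inner_comm, ← hp, ha, hb]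
      rw [← hexpand]
      nlinarith [norm_nonneg ((x₁ : H) - (x₂ : H)), hdiam]
    clear hy hsy hexp hlow hx₂ hu hnu ha hb hp hs
    clear u y x₁ x₂ hx₀ x₀ hd hA
    have ht1 : t ≤ 1 := by linarith
    have hp5 : p < 5 * t := by
      have h2tp : 2 * (t * p) < a * (b ^ 2 + t ^ 2 - (s - t ^ 2) ^ 2) := by
        have h := mul_lt_mul_of_pos_left hlow2 ha0
        have he : a * (2 * (t * (a⁻¹ * p))) = 2 * (t * p) := by
          field_simp
        linarith [he ▸ h]
      have h2 : a ≤ 2 := by nlinarith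
      rcases le_or_gt 0 (b ^ 2 + t ^ 2 - (s - t ^ 2) ^ 2) with hX | hX
      · have h1 : b ^ 2 + t ^ 2 - (s - t ^ 2) ^ 2 ≤ 5 * t ^ 2 := by
          nlinarith [hb0, hbub, hs1, hs0, ht0, sq_nonneg t]
        have h4 : a * (b ^ 2 + t ^ 2 - (s - t ^ 2) ^ 2) ≤ 2 * (5 * t ^ 2) := by
          calc a * (b ^ 2 + t ^ 2 - (s - t ^ 2) ^ 2)
              ≤ 2 * (b ^ 2 + t ^ 2 - (s - t ^ 2) ^ 2) := mul_le_mul_of_nonneg_right h2 hX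
            _ ≤ 2 * (5 * t ^ 2) := by linarith
        nlinarith [lt_of_lt_of_le h2tp h4, ht0]
      · have h4 : a * (b ^ 2 + t ^ 2 - (s - t ^ 2) ^ 2) < 0 := mul_neg_of_pos_of_neg ha0 hX
        nlinarith [lt_trans h2tp h4, ht0]
    have hb2 : (s - t ^ 2 - t) ^ 2 ≤ b ^ 2 := by
      have hpos : 0 ≤ s - t ^ 2 - t := by nlinarith
      exact pow_le_pow_left₀ hpos hblow 2
    have ha2 : (s - t ^ 2) ^ 2 ≤ a ^ 2 := pow_le_pow_left₀ (le_of_lt hst) (le_of_lt hx₁) 2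
    clear hlow2 haub hbub hblow hx₁ hb0 ha0 hst ht32
    have h1 : t ^ 2 ≤ t := by
      calc t ^ 2 = t * t := by ring
        _ ≤ t := mul_le_of_le_one_right ht0.le ht1
    have hst2 : s * t ^ 2 ≤ t := by
      calc s * t ^ 2 ≤ 1 * t ^ 2 := mul_le_mul_of_nonneg_right hs1 (sq_nonneg t)
        _ = t ^ 2 := one_mul _
        _ ≤ t := h1
    have hstt : s * t ≤ t := by
      calc s * t ≤ 1 * t := mul_le_mul_of_nonneg_right hs1 ht0.le
        _ = t := one_mul _
    have e1 : s ^ 2 - 2 * t ≤ (s - t ^ 2) ^ 2 := by nlinarith [sq_nonneg (t ^ 2)]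
    have e2 : s ^ 2 - 4 * t ≤ (s - t ^ 2 - t) ^ 2 := by
      nlinarith [sq_nonneg (t ^ 2 + t)]
    have h16 : 16 * t = (2 * s ^ 2 - 1) / 2 := by rw [ht]; ring
    linarith [e1, e2, ha2, hb2, hp5, hsq, hcon, h16]
  -- conclude
  have hfin : s ≤ Real.sqrt (1 / 2) := (Real.le_sqrt hs0 (by norm_num)).mpr key
  rw [show (1 : ℝ) / 2 = (2 : ℝ)⁻¹ by norm_num, Real.sqrt_inv] at hfin
  rw [one_div]
  exact hfin

lemma exists_orthonormal_seq (h : ¬ FiniteDimensional ℝ H) :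
    ∃ e : ℕ → H, Orthonormal ℝ e := by
  obtain ⟨w, b, hb⟩ := exists_hilbertBasis ℝ H
  have hinf : w.Infinite := by
    rw [← Set.infinite_coe_iff]
    by_contra hfin
    haveI : Finite (w : Set H) := not_infinite_iff_finite.mp hfin
    apply h
    have h1 := b.dense_span
    have h2 : (Submodule.span ℝ (Set.range ⇑b)) = Submodule.span ℝ w := by
      rw [hb, Subtype.range_coe]
    have hfd : FiniteDimensional ℝ (Submodule.span ℝ (w : Set H)) :=
      FiniteDimensional.span_of_finite ℝ (Set.toFinite w)
    have h3 : (Submodule.span ℝ (w : Set H)).topologicalClosure = Submodule.span ℝ (w : Set H) :=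
      (Submodule.span ℝ (w : Set H)).closed_of_finiteDimensional.submodule_topologicalClosure_eq
    rw [h2, h3] at h1
    haveI hfd' : FiniteDimensional ℝ (⊤ : Submodule ℝ H) := h1 ▸ hfd
    exact Submodule.topEquiv.finiteDimensional
  haveI : Infinite w := Set.infinite_coe_iff.mpr hinf
  have horth : Orthonormal ℝ (fun i : w => (i : H)) := hb ▸ b.orthonormal
  let f := Infinite.natEmbedding w
  exact ⟨fun n => (f n : H), horth.comp f f.injective⟩

lemma example_props (h : ¬ FiniteDimensional ℝ H) :
    ∃ A : Set H, IsBounded A ∧ Metric.diam A = 1 ∧ 1 / Real.sqrt 2 ≤ chebRadius A := by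
  obtain ⟨e, he⟩ := exists_orthonormal_seq h
  have hs2 : (0:ℝ) < Real.sqrt 2 := Real.sqrt_pos.mpr (by norm_num)
  have hs2' : (1:ℝ) ≤ Real.sqrt 2 := by
    rw [show (1:ℝ) = Real.sqrt 1 by simp]
    exact Real.sqrt_le_sqrt (by norm_num)
  have hsq2 : Real.sqrt 2 ^ 2 = 2 := Real.sq_sqrt (by norm_num)
  set v : ℕ → H := fun n => (Real.sqrt 2)⁻¹ • e n with hv
  set A : Set H := Set.range v with hA
  have hnorm : ∀ n, ‖v n‖ = (Real.sqrt 2)⁻¹ := by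
    intro n
    rw [hv, norm_smul, norm_inv, Real.norm_eq_abs, abs_of_pos hs2, he.1 n, mul_one]
  have hAb : IsBounded A := by
    apply (isBounded_closedBall (x := (0:H)) (r := 1)).subset
    rintro x ⟨n, rfl⟩
    simp only [mem_closedBall, dist_zero_right]
    rw [hnorm n]
    rw [inv_le_one_iff₀]
    right; exact hs2'
  have hdist : ∀ i j, i ≠ j → dist (v i) (v j) = 1 := by
    intro i j hij
    rw [dist_eq_norm]
    have h1 : ‖e i - e j‖ ^ 2 = 2 := by
      rw [@norm_sub_sq_real, he.1 i, he.1 j, he.2 hij]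
      norm_num
    have h2 : ‖e i - e j‖ = Real.sqrt 2 := by
      rw [← Real.sqrt_sq (norm_nonneg _), h1]
    have h3 : v i - v j = (Real.sqrt 2)⁻¹ • (e i - e j) := by
      rw [hv, smul_sub]
    rw [h3, norm_smul, norm_inv, Real.norm_eq_abs, abs_of_pos hs2, h2,
      inv_mul_cancel₀ (ne_of_gt hs2)]
  have hdiam : Metric.diam A = 1 := by
    apply le_antisymm
    · apply Metric.diam_le_of_forall_dist_le zero_le_one
      rintro x ⟨i, rfl⟩ y ⟨j, rfl⟩
      rcases eq_or_ne i j with rfl | hij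
      · simp
      · rw [hdist i j hij]
    · rw [← hdist 0 1 (by norm_num)]
      exact Metric.dist_le_diam_of_mem hAb ⟨0, rfl⟩ ⟨1, rfl⟩
  refine ⟨A, hAb, hdiam, ?_⟩
  apply le_ciInf
  intro y
  set M : ℝ := ⨆ x : A, ‖(x : H) - y‖ with hM
  have hM0 : 0 ≤ M := Real.iSup_nonneg fun _ => norm_nonneg _
  have hMkey : 1 / 2 ≤ M ^ 2 := by
    by_contra hc
    push_neg at hc
    set δ : ℝ := (1 / 2 - M ^ 2) / 4 with hδ
    have hδ0 : 0 < δ := by rw [hδ]; linarith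
    -- find i with small inner product
    obtain ⟨i, hi⟩ : ∃ i, (inner ℝ (e i) y : ℝ) < δ := by
      by_contra hall
      push_neg at hall
      obtain ⟨n, hn⟩ := exists_nat_gt (‖y‖ ^ 2 / δ ^ 2)
      have hbes := he.sum_inner_products_le (s := Finset.range n) y
      have hterm : ∀ i ∈ Finset.range n, δ ^ 2 ≤ ‖(inner ℝ (e i) y : ℝ)‖ ^ 2 := by
        intro i _
        have h1 : δ ≤ (inner ℝ (e i) y : ℝ) := hall i
        have h2 : δ ≤ ‖(inner ℝ (e i) y : ℝ)‖ := le_trans h1 (le_abs_self _)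
        exact pow_le_pow_left₀ hδ0.le h2 2
      have hsum : (n : ℝ) * δ ^ 2 ≤ ‖y‖ ^ 2 := by
        calc (n : ℝ) * δ ^ 2 = ∑ _i ∈ Finset.range n, δ ^ 2 := by
              rw [Finset.sum_const, Finset.card_range, nsmul_eq_mul]
          _ ≤ ∑ i ∈ Finset.range n, ‖(inner ℝ (e i) y : ℝ)‖ ^ 2 := Finset.sum_le_sum hterm
          _ ≤ ‖y‖ ^ 2 := hbes
      have : (n : ℝ) ≤ ‖y‖ ^ 2 / δ ^ 2 := by
        rw [le_div_iff₀ (by positivity)]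
        exact hsum
      linarith
    -- the point v i is far from y
    have hfar : 1 / 2 - 2 * δ ≤ ‖v i - y‖ ^ 2 := by
      have h1 : ‖v i - y‖ ^ 2 = ‖v i‖ ^ 2 - 2 * (inner ℝ (v i) y : ℝ) + ‖y‖ ^ 2 :=
        @norm_sub_sq_real _ _ _ _ _
      have h2 : (inner ℝ (v i) y : ℝ) = (Real.sqrt 2)⁻¹ * (inner ℝ (e i) y : ℝ) := by
        rw [hv]; exact real_inner_smul_left _ _ _
      have h3 : ‖v i‖ ^ 2 = 1 / 2 := by
        rw [hnorm i, inv_pow, hsq2]; norm_num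
      have h4 : (Real.sqrt 2)⁻¹ * (inner ℝ (e i) y : ℝ) ≤ δ := by
        rcases le_or_gt 0 (inner ℝ (e i) y : ℝ) with hp | hp
        · have hle1 : (Real.sqrt 2)⁻¹ ≤ 1 := by
            rw [inv_le_one_iff₀]; right; exact hs2'
          calc (Real.sqrt 2)⁻¹ * (inner ℝ (e i) y : ℝ)
              ≤ 1 * (inner ℝ (e i) y : ℝ) := mul_le_mul_of_nonneg_right hle1 hp
            _ = (inner ℝ (e i) y : ℝ) := one_mul _
            _ ≤ δ := hi.le
        · have : (Real.sqrt 2)⁻¹ * (inner ℝ (e i) y : ℝ) < 0 :=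
            mul_neg_of_pos_of_neg (by positivity) hp
          linarith
      rw [h1, h2, h3]
      nlinarith [sq_nonneg ‖y‖]
    have hle : ‖v i - y‖ ≤ M := le_ciSup (bddAbove_range_norm_sub hAb y) ⟨v i, ⟨i, rfl⟩⟩
    have : ‖v i - y‖ ^ 2 ≤ M ^ 2 := pow_le_pow_left₀ (norm_nonneg _) hle 2
    rw [hδ] at hfar hδ0
    linarith
  calc 1 / Real.sqrt 2 = Real.sqrt (1 / 2) := by
        rw [one_div, one_div, Real.sqrt_inv]
    _ ≤ Real.sqrt (M ^ 2) := Real.sqrt_le_sqrt hMkey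
    _ = M := Real.sqrt_sq hM0

lemma exists_example (h : ¬ FiniteDimensional ℝ H) :
    ∃ A : Set H, IsBounded A ∧ Metric.diam A = 1 ∧ chebRadius A = 1 / Real.sqrt 2 := by
  obtain ⟨A, hb, hd, hge⟩ := example_props h
  have hne : A.Nonempty := by
    rcases A.eq_empty_or_nonempty with rfl | h'
    · simp at hd
    · exact h'
  exact ⟨A, hb, hd, le_antisymm (jung A hb hne hd) hge⟩

end aux

theorem stmt18 {H : Type*} [NormedAddCommGroup H] [InnerProductSpace ℝ H] [CompleteSpace H] :
    sSup {r : ℝ | ∃ A : Set H, Bornology.IsBounded A ∧ Metric.diam A = 1 ∧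
        r = chebRadiusIn (closure (convexHull ℝ A)) A} =
      sSup {r : ℝ | ∃ A : Set H, Bornology.IsBounded A ∧ Metric.diam A = 1 ∧
        r = chebRadius A} ∧
    (¬ FiniteDimensional ℝ H →
      sSup {r : ℝ | ∃ A : Set H, Bornology.IsBounded A ∧ Metric.diam A = 1 ∧
        r = chebRadius A} = 1 / Real.sqrt 2) := by
  have hnonempty : ∀ A : Set H, Metric.diam A = 1 → A.Nonempty := by
    intro A hd
    rcases A.eq_empty_or_nonempty with rfl | h
    · simp at hd
    · exact h
  constructor
  · congr 1
    ext r
    constructor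
    · rintro ⟨A, hb, hd, rfl⟩
      exact ⟨A, hb, hd, (chebRadiusIn_eq A hb (hnonempty A hd))⟩
    · rintro ⟨A, hb, hd, rfl⟩
      exact ⟨A, hb, hd, (chebRadiusIn_eq A hb (hnonempty A hd)).symm⟩
  · intro hinf
    obtain ⟨A, hb, hd, hr⟩ := exists_example (H := H) hinf
    have hub : ∀ r ∈ {r : ℝ | ∃ A : Set H, Bornology.IsBounded A ∧ Metric.diam A = 1 ∧
        r = chebRadius A}, r ≤ 1 / Real.sqrt 2 := by
      rintro r ⟨B, hb', hd', rfl⟩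
      exact jung B hb' (hnonempty B hd') hd'
    apply le_antisymm
    · exact csSup_le ⟨chebRadius A, A, hb, hd, rfl⟩ hub
    · rw [← hr]
      exact le_csSup ⟨1 / Real.sqrt 2, hub⟩ ⟨A, hb, hd, rfl⟩
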